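/- Suppose there exists an e-permutation P of (d, f) admitting a partition pair (S_D, S_F). Then there exists an e-permutation Q of (d, f) such that (S_D, S_F) is a partition pair for Q and Q is (S_D, S_F)-sorted. -/

import Mathlib

/-- `P` dominates `Q`: every partial sum `∑_{i ≤ j} P i` is at least the
corresponding partial sum of `Q`, and the total sums agree. -/
def Dominates {n : ℕ} (P Q : Fin n → ℚ) : Prop :=
  (∀ j : Fin n, ∑ i ∈ Finset.Iic j, Q i ≤ ∑ i ∈ Finset.Iic j, P i) ∧
  (∑ i, P i = ∑ i, Q i)
/-- The multiset of values of a slope tuple. -/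
def valMS {n : ℕ} (s : Fin n → ℚ) : Multiset ℚ :=
  Finset.univ.val.map s

/-- `P` is an `e`-permutation of `(d, f)`. -/
def IsEPerm {m k : ℕ} (d : Fin m → ℚ) (f : Fin k → ℚ) (e P : Fin (m + k) → ℚ) : Prop :=
  valMS P = valMS d + valMS f ∧
  Dominates P e ∧
  ∀ i : Fin (m + k), (P i < e i → P i ∈ valMS d) ∧ (e i < P i → P i ∈ valMS f)

/-- `(SD, SF)` is a partition pair for the `e`-permutation `P` of `(d, f)`. -/
def IsPartitionPair {m k : ℕ} (d : Fin m → ℚ) (f : Fin k → ℚ) (e P : Fin (m + k) → ℚ)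
    (SD SF : Finset (Fin (m + k))) : Prop :=
  Disjoint SD SF ∧ SD ∪ SF = Finset.univ ∧
  SD.val.map P = valMS d ∧ (∀ i ∈ SD, P i ≤ e i) ∧
  SF.val.map P = valMS f ∧ (∀ j ∈ SF, e j ≤ P j)

/-- `P` is `(SD, SF)`-sorted: its values along `SD` (in increasing index order)
are exactly `d 0, …, d (m-1)`, and similarly for `SF` and `f`. -/
def IsSortedPair {m k : ℕ} (d : Fin m → ℚ) (f : Fin k → ℚ) (P : Fin (m + k) → ℚ)
    (SD SF : Finset (Fin (m + k))) : Prop :=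
  ((SD.sort (· ≤ ·)).map P = List.ofFn d) ∧ ((SF.sort (· ≤ ·)).map P = List.ofFn f)
open Finset

lemma valMS_sum_comp {m : ℕ} {x g : Fin m → ℚ} (h : valMS x = valMS g)
    (F : ℚ → ℚ) : ∑ t, F (x t) = ∑ t, F (g t) := by
  have h2 := congrArg (fun M => (M.map F).sum) h
  simpa [valMS, Finset.sum, Multiset.map_map, Function.comp_def] using h2

lemma valMS_card_filter {m : ℕ} {x g : Fin m → ℚ} (h : valMS x = valMS g)
    (p : ℚ → Prop) [DecidablePred p] :
    (univ.filter (fun t => p (x t))).card = (univ.filter (fun t => p (g t))).card := by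
  have h2 := congrArg (Multiset.countP p) h
  rw [valMS, valMS, Multiset.countP_map, Multiset.countP_map] at h2
  rw [Finset.card_def, Finset.card_def, Finset.filter_val, Finset.filter_val]
  exact h2

lemma exists_ge_of_valMS_eq {m : ℕ} {x g : Fin m → ℚ} (hg : Antitone g)
    (h : valMS x = valMS g) (t : Fin m) : ∃ s : Fin m, t ≤ s ∧ g t ≤ x s := by
  by_contra hc
  push_neg at hc
  have hcard := valMS_card_filter h (fun v => v < g t)
  have hA : Finset.Ici t ⊆ univ.filter (fun s => x s < g t) := fun s hs =>
    mem_filter.2 ⟨mem_univ s, hc s (mem_Ici.1 hs)⟩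
  have hB : univ.filter (fun s => g s < g t) ⊆ Finset.Ioi t := by
    intro s hs
    rcases mem_filter.1 hs with ⟨-, hlt⟩
    rw [mem_Ioi]
    by_contra hts
    exact absurd (hg (not_lt.1 hts)) (not_le.2 hlt)
  have h1 := (card_le_card hA).trans (le_of_eq hcard)
  have h2 := h1.trans (card_le_card hB)
  rw [Fin.card_Ici, Fin.card_Ioi] at h2
  have := t.isLt
  omega

lemma exists_le_of_valMS_eq {m : ℕ} {x g : Fin m → ℚ} (hg : Antitone g)
    (h : valMS x = valMS g) (t : Fin m) : ∃ s : Fin m, s ≤ t ∧ x s ≤ g t := by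
  by_contra hc
  push_neg at hc
  have hcard := valMS_card_filter h (fun v => g t < v)
  have hA : Finset.Iic t ⊆ univ.filter (fun s => g t < x s) := fun s hs =>
    mem_filter.2 ⟨mem_univ s, hc s (mem_Iic.1 hs)⟩
  have hB : univ.filter (fun s => g t < g s) ⊆ Finset.Iio t := by
    intro s hs
    rcases mem_filter.1 hs with ⟨-, hlt⟩
    rw [mem_Iio]
    by_contra hts
    exact absurd (hg (not_lt.1 hts)) (not_le.2 hlt)
  have h1 := (card_le_card hA).trans (le_of_eq hcard)
  have h2 := h1.trans (card_le_card hB)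
  rw [Fin.card_Iic, Fin.card_Iio] at h2
  omega

lemma prefix_sum_le_of_valMS_eq {m : ℕ} {x g : Fin m → ℚ} (hg : Antitone g)
    (h : valMS x = valMS g) (r : ℕ) :
    ∑ t ∈ univ.filter (fun t : Fin m => (t : ℕ) < r), x t
      ≤ ∑ t ∈ univ.filter (fun t : Fin m => (t : ℕ) < r), g t := by
  rcases Nat.eq_zero_or_pos r with hr0 | hr0
  · simp [hr0]
  rcases le_or_gt m r with hmr | hmr
  · have hfilt : univ.filter (fun t : Fin m => (t : ℕ) < r) = univ := by
      apply filter_true_of_mem; intro t _; exact lt_of_lt_of_le t.isLt hmr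
    rw [hfilt]
    exact le_of_eq (valMS_sum_comp h id)
  · set c := g ⟨r - 1, by omega⟩ with hc
    set T := univ.filter (fun t : Fin m => (t : ℕ) < r) with hT
    have key : ∑ t ∈ T, max (x t - c) 0 ≤ ∑ t ∈ T, max (g t - c) 0 := by
      calc ∑ t ∈ T, max (x t - c) 0 ≤ ∑ t, max (x t - c) 0 :=
            sum_le_sum_of_subset_of_nonneg (subset_univ T) (fun t _ _ => le_max_right _ _)
        _ = ∑ t, max (g t - c) 0 := valMS_sum_comp h (fun v => max (v - c) 0)
        _ = ∑ t ∈ T, max (g t - c) 0 := by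
            refine (sum_subset (subset_univ T) ?_).symm
            intro t _ ht
            have htr : r ≤ (t : ℕ) := by
              simp only [hT, mem_filter, mem_univ, true_and, not_lt] at ht
              exact ht
            have hgc : g t ≤ c := hg (by rw [Fin.le_def]; simp; omega)
            simp [max_eq_right, sub_nonpos.2 hgc]
    have h1 : ∀ t ∈ T, x t ≤ max (x t - c) 0 + c := fun t _ => by
      have := le_max_left (x t - c) 0; linarith
    have h2 : ∀ t ∈ T, max (g t - c) 0 + c = g t := by
      intro t ht
      have htr : (t : ℕ) < r := by
        simp only [hT, mem_filter, mem_univ, true_and] at ht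
        exact ht
      have hcg : c ≤ g t := hg (by rw [Fin.le_def]; simp; omega)
      rw [max_eq_left (by linarith)]; ring
    calc ∑ t ∈ T, x t ≤ ∑ t ∈ T, (max (x t - c) 0 + c) := sum_le_sum h1
      _ ≤ ∑ t ∈ T, (max (g t - c) 0 + c) := by
          rw [sum_add_distrib, sum_add_distrib]; exact add_le_add key le_rfl
      _ = ∑ t ∈ T, g t := sum_congr rfl h2

lemma lowerSet_eq_filter {m : ℕ} (T : Finset (Fin m))
    (hT : ∀ s t : Fin m, s ≤ t → t ∈ T → s ∈ T) :
    T = univ.filter (fun t : Fin m => (t : ℕ) < T.card) := by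
  ext t
  simp only [mem_filter, mem_univ, true_and]
  constructor
  · intro ht
    have hsub : Finset.Iic t ⊆ T := fun s hs => hT s t (mem_Iic.1 hs) ht
    have := card_le_card hsub
    rw [Fin.card_Iic] at this
    omega
  · intro ht
    by_contra htn
    have hsub : T ⊆ Finset.Iio t := by
      intro s hs
      rw [mem_Iio]
      by_contra hst
      exact htn (hT t s (not_lt.1 hst) hs)
    have := card_le_card hsub
    rw [Fin.card_Iio] at this
    omega

lemma lower_sum_le_of_valMS_eq {m : ℕ} {x g : Fin m → ℚ} (hg : Antitone g)
    (h : valMS x = valMS g) (T : Finset (Fin m))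
    (hT : ∀ s t : Fin m, s ≤ t → t ∈ T → s ∈ T) :
    ∑ t ∈ T, x t ≤ ∑ t ∈ T, g t := by
  rw [lowerSet_eq_filter T hT]
  exact prefix_sum_le_of_valMS_eq hg h T.card

lemma map_univ_orderEmbOfFin {α : Type*} [LinearOrder α] (s : Finset α) {n : ℕ}
    (h : s.card = n) : univ.map (s.orderEmbOfFin h).toEmbedding = s := by
  apply Finset.eq_of_subset_of_card_le
  · intro x hx
    rcases Finset.mem_map.1 hx with ⟨t, -, rfl⟩
    exact s.orderEmbOfFin_mem h t
  · simp [h]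
theorem exists_sorted_ePerm {m k : ℕ} (d : Fin m → ℚ) (f : Fin k → ℚ)
    (e : Fin (m + k) → ℚ) (hd : Antitone d) (hf : Antitone f) (he : Antitone e)
    (SD SF : Finset (Fin (m + k)))
    (h : ∃ P : Fin (m + k) → ℚ, IsEPerm d f e P ∧ IsPartitionPair d f e P SD SF) :
    ∃ Q : Fin (m + k) → ℚ, IsEPerm d f e Q ∧ IsPartitionPair d f e Q SD SF ∧
      IsSortedPair d f Q SD SF := by
  classical
  obtain ⟨P, ⟨hPval, hPdom, hPthird⟩, hdisj, hunion, hPD, hPDle, hPF, hPFge⟩ := h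
  have hmcard : SD.card = m := by
    have h1 := congrArg Multiset.card hPD
    rw [Multiset.card_map, valMS, Multiset.card_map] at h1
    simpa using h1
  have hkcard : SF.card = k := by
    have h1 := congrArg Multiset.card hPF
    rw [Multiset.card_map, valMS, Multiset.card_map] at h1
    simpa using h1
  have hmemSF : ∀ i : Fin (m + k), i ∉ SD → i ∈ SF := by
    intro i hi
    have : i ∈ SD ∪ SF := hunion ▸ mem_univ i
    exact (mem_union.1 this).resolve_left hi
  have hmemnD : ∀ i : Fin (m + k), i ∈ SF → i ∉ SD := fun i hi =>
    Finset.disjoint_right.1 hdisj hi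
  set embD := SD.orderEmbOfFin hmcard with hembD
  set embF := SF.orderEmbOfFin hkcard with hembF
  have hSDmap : univ.map embD.toEmbedding = SD := map_univ_orderEmbOfFin SD hmcard
  have hSFmap : univ.map embF.toEmbedding = SF := map_univ_orderEmbOfFin SF hkcard
  set Q : Fin (m + k) → ℚ := fun i =>
    if hi : i ∈ SD then d ((SD.orderIsoOfFin hmcard).symm ⟨i, hi⟩)
    else f ((SF.orderIsoOfFin hkcard).symm ⟨i, hmemSF i hi⟩) with hQ
  -- evaluation of Q along the order embeddings
  have hQD : ∀ t : Fin m, Q (embD t) = d t := by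
    intro t
    have hmem : embD t ∈ SD := SD.orderEmbOfFin_mem hmcard t
    simp only [hQ]
    rw [dif_pos hmem]
    congr 1
    have h1 : (⟨embD t, hmem⟩ : {x // x ∈ SD}) = SD.orderIsoOfFin hmcard t :=
      Subtype.ext (SD.coe_orderIsoOfFin_apply hmcard t).symm
    rw [h1, OrderIso.symm_apply_apply]
  have hQF : ∀ t : Fin k, Q (embF t) = f t := by
    intro t
    have hmem : embF t ∈ SF := SF.orderEmbOfFin_mem hkcard t
    have hnot : embF t ∉ SD := hmemnD _ hmem
    simp only [hQ]
    rw [dif_neg hnot]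
    congr 1
    have h1 : (⟨embF t, hmemSF _ hnot⟩ : {x // x ∈ SF}) = SF.orderIsoOfFin hkcard t :=
      Subtype.ext (SF.coe_orderIsoOfFin_apply hkcard t).symm
    rw [h1, OrderIso.symm_apply_apply]
  -- sortedness
  have hsortD : (SD.sort (· ≤ ·)).map Q = List.ofFn d := by
    apply List.ext_getElem
    · simp [Finset.length_sort, hmcard]
    · intro n h1 h2
      have hn : n < m := by simpa using h2
      rw [List.getElem_map, List.getElem_ofFn]
      have h3 := hQD ⟨n, hn⟩
      rw [Finset.orderEmbOfFin_apply] at h3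
      exact h3
  have hsortF : (SF.sort (· ≤ ·)).map Q = List.ofFn f := by
    apply List.ext_getElem
    · simp [Finset.length_sort, hkcard]
    · intro n h1 h2
      have hn : n < k := by simpa using h2
      rw [List.getElem_map, List.getElem_ofFn]
      have h3 := hQF ⟨n, hn⟩
      rw [Finset.orderEmbOfFin_apply] at h3
      exact h3
  -- multiset values on SD and SF
  have hQDval : SD.val.map Q = valMS d := by
    calc SD.val.map Q = ((SD.sort (· ≤ ·) : List _) : Multiset _).map Q := by
          rw [Finset.sort_eq]
      _ = (((SD.sort (· ≤ ·)).map Q : List _) : Multiset _) := (Multiset.map_coe _ _)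
      _ = ((List.ofFn d : List _) : Multiset _) := by rw [hsortD]
      _ = valMS d := by rw [valMS, Fin.univ_val_map]
  have hQFval : SF.val.map Q = valMS f := by
    calc SF.val.map Q = ((SF.sort (· ≤ ·) : List _) : Multiset _).map Q := by
          rw [Finset.sort_eq]
      _ = (((SF.sort (· ≤ ·)).map Q : List _) : Multiset _) := (Multiset.map_coe _ _)
      _ = ((List.ofFn f : List _) : Multiset _) := by rw [hsortF]
      _ = valMS f := by rw [valMS, Fin.univ_val_map]
  -- the pullbacks of P to Fin m and Fin k
  have hxval : valMS (fun t => P (embD t)) = valMS d := by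
    rw [valMS, ← hPD, ← hSDmap, Finset.map_val, Multiset.map_map]
    rfl
  have hyval : valMS (fun t => P (embF t)) = valMS f := by
    rw [valMS, ← hPF, ← hSFmap, Finset.map_val, Multiset.map_map]
    rfl
  -- pointwise comparisons with e
  have hQDle : ∀ i ∈ SD, Q i ≤ e i := by
    intro i hi
    set t := (SD.orderIsoOfFin hmcard).symm ⟨i, hi⟩ with ht
    have hit : embD t = i := by
      have h1 := congrArg Subtype.val
        ((SD.orderIsoOfFin hmcard).apply_symm_apply ⟨i, hi⟩)
      rw [SD.coe_orderIsoOfFin_apply] at h1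
      exact h1
    obtain ⟨s, hts, hds⟩ := exists_ge_of_valMS_eq hd hxval t
    have h1 : P (embD s) ≤ e (embD s) := hPDle _ (SD.orderEmbOfFin_mem hmcard s)
    have h2 : e (embD s) ≤ e (embD t) := he (embD.monotone hts)
    have hQi : Q i = d t := by rw [← hit, hQD]
    rw [hQi, ← hit]
    exact le_trans hds (le_trans h1 h2)
  have hQFge : ∀ j ∈ SF, e j ≤ Q j := by
    intro i hi
    set t := (SF.orderIsoOfFin hkcard).symm ⟨i, hi⟩ with ht
    have hit : embF t = i := by
      have h1 := congrArg Subtype.val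
        ((SF.orderIsoOfFin hkcard).apply_symm_apply ⟨i, hi⟩)
      rw [SF.coe_orderIsoOfFin_apply] at h1
      exact h1
    obtain ⟨s, hts, hds⟩ := exists_le_of_valMS_eq hf hyval t
    have h1 : e (embF s) ≤ P (embF s) := hPFge _ (SF.orderEmbOfFin_mem hkcard s)
    have h2 : e (embF t) ≤ e (embF s) := he (embF.monotone hts)
    have hQi : Q i = f t := by rw [← hit, hQF]
    rw [hQi, ← hit]
    exact le_trans h2 (le_trans h1 hds)
  -- total multiset of values of Q
  have huval : univ.val = SD.val + SF.val := by
    rw [← hunion, ← Finset.disjUnion_eq_union SD SF hdisj]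
    rfl
  have hQval : valMS Q = valMS d + valMS f := by
    rw [valMS, huval, Multiset.map_add, hQDval, hQFval]
  -- total sums
  have hQPsum : ∑ i, Q i = ∑ i, P i := by
    have hQP : valMS Q = valMS P := by rw [hQval, hPval]
    exact valMS_sum_comp hQP id
  -- partial sums: Q dominates P pointwise on initial segments
  have hsplit : ∀ (g : Fin (m + k) → ℚ) (j : Fin (m + k)),
      ∑ i ∈ Finset.Iic j, g i = ∑ i ∈ SD ∩ Finset.Iic j, g i + ∑ i ∈ SF ∩ Finset.Iic j, g i := by
    intro g j
    rw [← Finset.sum_union (hdisj.mono Finset.inter_subset_left Finset.inter_subset_left),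
      ← Finset.union_inter_distrib_right, hunion, Finset.univ_inter]
  have hinterD : ∀ j : Fin (m + k),
      SD ∩ Finset.Iic j = (univ.filter (fun t : Fin m => embD t ≤ j)).map embD.toEmbedding := by
    intro j
    ext i
    simp only [mem_inter, mem_Iic, Finset.mem_map, mem_filter, mem_univ, true_and,
      RelEmbedding.coe_toEmbedding]
    constructor
    · rintro ⟨hiD, hij⟩
      refine ⟨(SD.orderIsoOfFin hmcard).symm ⟨i, hiD⟩, ?_, ?_⟩ <;>
        · have h1 := congrArg Subtype.val
            ((SD.orderIsoOfFin hmcard).apply_symm_apply ⟨i, hiD⟩)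
          rw [SD.coe_orderIsoOfFin_apply] at h1
          simp [hembD, h1, hij]
    · rintro ⟨t, htj, rfl⟩
      exact ⟨SD.orderEmbOfFin_mem hmcard t, htj⟩
  have hinterF : ∀ j : Fin (m + k),
      SF ∩ Finset.Iic j = (univ.filter (fun t : Fin k => embF t ≤ j)).map embF.toEmbedding := by
    intro j
    ext i
    simp only [mem_inter, mem_Iic, Finset.mem_map, mem_filter, mem_univ, true_and,
      RelEmbedding.coe_toEmbedding]
    constructor
    · rintro ⟨hiF, hij⟩
      refine ⟨(SF.orderIsoOfFin hkcard).symm ⟨i, hiF⟩, ?_, ?_⟩ <;>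
        · have h1 := congrArg Subtype.val
            ((SF.orderIsoOfFin hkcard).apply_symm_apply ⟨i, hiF⟩)
          rw [SF.coe_orderIsoOfFin_apply] at h1
          simp [hembF, h1, hij]
    · rintro ⟨t, htj, rfl⟩
      exact ⟨SF.orderEmbOfFin_mem hkcard t, htj⟩
  have hQdom : Dominates Q e := by
    constructor
    · intro j
      have hD : ∑ i ∈ SD ∩ Finset.Iic j, P i ≤ ∑ i ∈ SD ∩ Finset.Iic j, Q i := by
        rw [hinterD j, Finset.sum_map, Finset.sum_map]
        simp only [RelEmbedding.coe_toEmbedding]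
        have := lower_sum_le_of_valMS_eq hd hxval
          (univ.filter (fun t : Fin m => embD t ≤ j))
          (fun s t hst ht => by
            simp only [mem_filter, mem_univ, true_and] at ht ⊢
            exact le_trans (embD.monotone hst) ht)
        calc ∑ t ∈ univ.filter (fun t : Fin m => embD t ≤ j), P (embD t)
            ≤ ∑ t ∈ univ.filter (fun t : Fin m => embD t ≤ j), d t := this
          _ = ∑ t ∈ univ.filter (fun t : Fin m => embD t ≤ j), Q (embD t) := by
              exact sum_congr rfl (fun t _ => (hQD t).symm)
      have hF : ∑ i ∈ SF ∩ Finset.Iic j, P i ≤ ∑ i ∈ SF ∩ Finset.Iic j, Q i := by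
        rw [hinterF j, Finset.sum_map, Finset.sum_map]
        simp only [RelEmbedding.coe_toEmbedding]
        have := lower_sum_le_of_valMS_eq hf hyval
          (univ.filter (fun t : Fin k => embF t ≤ j))
          (fun s t hst ht => by
            simp only [mem_filter, mem_univ, true_and] at ht ⊢
            exact le_trans (embF.monotone hst) ht)
        calc ∑ t ∈ univ.filter (fun t : Fin k => embF t ≤ j), P (embF t)
            ≤ ∑ t ∈ univ.filter (fun t : Fin k => embF t ≤ j), f t := this
          _ = ∑ t ∈ univ.filter (fun t : Fin k => embF t ≤ j), Q (embF t) := by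
              exact sum_congr rfl (fun t _ => (hQF t).symm)
      calc ∑ i ∈ Finset.Iic j, e i ≤ ∑ i ∈ Finset.Iic j, P i := hPdom.1 j
        _ = _ + _ := hsplit P j
        _ ≤ ∑ i ∈ SD ∩ Finset.Iic j, Q i + ∑ i ∈ SF ∩ Finset.Iic j, Q i := add_le_add hD hF
        _ = ∑ i ∈ Finset.Iic j, Q i := (hsplit Q j).symm
    · rw [hQPsum]
      exact hPdom.2
  refine ⟨Q, ⟨hQval, hQdom, ?_⟩, ⟨hdisj, hunion, hQDval, hQDle, hQFval, hQFge⟩,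
    hsortD, hsortF⟩
  intro i
  constructor
  · intro hlt
    by_cases hi : i ∈ SD
    · rw [← hQDval]
      exact Multiset.mem_map_of_mem Q hi
    · exact absurd (hQFge i (hmemSF i hi)) (not_le.2 hlt)
  · intro hlt
    by_cases hi : i ∈ SD
    · exact absurd (hQDle i hi) (not_le.2 hlt)
    · rw [← hQFval]
      exact Multiset.mem_map_of_mem Q (hmemSF i hi)
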